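/- For all positive integers n and r, c*(n,r) = Σ_{d | n, d | r, gcd(d, r/d) = 1} d · (−1)^{ω(r/d)}, the sum being over the unitary divisors d of r that divide n, where ω(m) denotes the number of distinct prime divisors of m. In particular, c*(n,r) is an integer. -/

import Mathlib

open Finset

/-- The unitary gcd `(n,r)_U`: the largest `d` with `d ∣ n`, `d ∣ r` and `gcd(d, r/d) = 1`. -/
def unitaryGcd (n r : ℕ) : ℕ :=
  (r.divisors.filter (fun d => d ∣ n ∧ Nat.Coprime d (r / d))).sup id

/-- The unitary Ramanujan sum `c*(n,r) = ∑_{1 ≤ k ≤ r, (k,r)_U = 1} exp(2πikn/r)`. -/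
noncomputable def unitaryRamanujanSum (n r : ℕ) : ℂ :=
  ∑ k ∈ (Finset.Icc 1 r).filter (fun k => unitaryGcd k r = 1),
    Complex.exp (2 * Real.pi * Complex.I * k * n / r)


private lemma geom_aux (m n : ℕ) (hm : m ≠ 0) :
    ∑ j ∈ Icc 1 m, Complex.exp (2 * Real.pi * Complex.I * j * n / m)
      = if m ∣ n then ((m : ℕ) : ℂ) else 0 := by
  have hmc : (m : ℂ) ≠ 0 := Nat.cast_ne_zero.mpr hm
  set ζ : ℂ := Complex.exp (2 * Real.pi * Complex.I * n / m) with hζ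
  have hterm : ∀ j : ℕ, Complex.exp (2 * Real.pi * Complex.I * j * n / m) = ζ ^ j := by
    intro j
    rw [hζ, ← Complex.exp_nat_mul]
    ring_nf
  have hζm : ζ ^ m = 1 := by
    rw [hζ, ← Complex.exp_nat_mul]
    have : (m : ℂ) * (2 * Real.pi * Complex.I * n / m) = (n : ℂ) * (2 * Real.pi * Complex.I) := by
      field_simp
    rw [this]
    exact_mod_cast Complex.exp_nat_mul_two_pi_mul_I n
  by_cases hdvd : m ∣ n
  · obtain ⟨c, rfl⟩ := hdvd
    have hζ1 : ζ = 1 := by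
      rw [hζ]
      have : 2 * Real.pi * Complex.I * (↑(m * c)) / m = (c : ℂ) * (2 * Real.pi * Complex.I) := by
        push_cast; field_simp
      rw [this]
      exact_mod_cast Complex.exp_nat_mul_two_pi_mul_I c
    simp only [hterm, hζ1, one_pow, sum_const, Nat.card_Icc, smul_eq_mul, mul_one]
    rw [if_pos (Dvd.intro c rfl)]
    simp
  · have hζ1 : ζ ≠ 1 := by
      intro h
      rw [hζ, Complex.exp_eq_one_iff] at h
      obtain ⟨t, ht⟩ := h
      have h2 : (2 * Real.pi * Complex.I : ℂ) ≠ 0 := by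
        simp [Real.pi_ne_zero, Complex.I_ne_zero]
      have hnm : (n : ℂ) = (t : ℂ) * m := by
        field_simp at ht
        linear_combination ht
      have hnm' : (n : ℤ) = m * t := by exact_mod_cast hnm.trans (mul_comm _ _)
      exact hdvd (Int.natCast_dvd_natCast.mp ⟨t, hnm'⟩)
    simp only [hterm]
    rw [if_neg hdvd]
    rw [← Finset.Ico_add_one_right_eq_Icc, Finset.sum_Ico_eq_sum_range]
    simp only [pow_add, pow_one]
    rw [← Finset.mul_sum, geom_sum_eq hζ1]
    simp [Nat.succ_sub_one, hζm]


private lemma D_fac {r : ℕ} (hr : r ≠ 0) {S : Finset ℕ} (hS : S ⊆ r.primeFactors) (q : ℕ) :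
    (∏ p ∈ S, p ^ r.factorization p).factorization q
      = if q ∈ S then r.factorization q else 0 := by
  have hp : ∀ p ∈ S, p.Prime := fun p hp => Nat.prime_of_mem_primeFactors (hS hp)
  rw [Nat.factorization_prod (fun p hps => pow_ne_zero _ (hp p hps).pos.ne')]
  rw [Finsupp.finset_sum_apply]
  have : ∀ p ∈ S, (p ^ r.factorization p).factorization q
      = if p = q then r.factorization q else 0 := by
    intro p hps
    rw [(hp p hps).factorization_pow, Finsupp.single_apply]
    split_ifs with h
    · rw [h]
    · rfl
  rw [Finset.sum_congr rfl this, Finset.sum_ite_eq' S q (fun _ => r.factorization q)]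

private lemma D_ne_zero {r : ℕ} (hr : r ≠ 0) {S : Finset ℕ} (hS : S ⊆ r.primeFactors) :
    (∏ p ∈ S, p ^ r.factorization p) ≠ 0 :=
  Finset.prod_ne_zero_iff.mpr fun p hp =>
    pow_ne_zero _ (Nat.prime_of_mem_primeFactors (hS hp)).pos.ne'

private lemma D_dvd {r : ℕ} (hr : r ≠ 0) {S : Finset ℕ} (hS : S ⊆ r.primeFactors) :
    (∏ p ∈ S, p ^ r.factorization p) ∣ r := by
  rw [← Nat.factorization_le_iff_dvd (D_ne_zero hr hS) hr]
  intro q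
  rw [D_fac hr hS q]
  split_ifs <;> simp

private lemma D_primeFactors {r : ℕ} (hr : r ≠ 0) {S : Finset ℕ} (hS : S ⊆ r.primeFactors) :
    (∏ p ∈ S, p ^ r.factorization p).primeFactors = S := by
  ext q
  rw [← Nat.support_factorization, Finsupp.mem_support_iff, D_fac hr hS q]
  constructor
  · intro h
    by_contra hq
    simp [hq] at h
  · intro hq
    rw [if_pos hq]
    have : q ∈ r.primeFactors := hS hq
    rw [← Nat.support_factorization, Finsupp.mem_support_iff] at this
    exact this

private lemma D_coprime {r : ℕ} (hr : r ≠ 0) {S : Finset ℕ} (hS : S ⊆ r.primeFactors) :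
    Nat.Coprime (∏ p ∈ S, p ^ r.factorization p)
      (r / (∏ p ∈ S, p ^ r.factorization p)) := by
  set D := ∏ p ∈ S, p ^ r.factorization p with hD
  have hDr : D ∣ r := D_dvd hr hS
  have hD0 : D ≠ 0 := D_ne_zero hr hS
  have hq0 : r / D ≠ 0 := Nat.div_ne_zero_iff.mpr ⟨hD0, Nat.le_of_dvd (Nat.pos_of_ne_zero hr) hDr⟩
  rw [← Nat.disjoint_primeFactors hD0 hq0]
  rw [D_primeFactors hr hS]
  rw [Finset.disjoint_left]
  intro q hq hq'
  rw [← Nat.support_factorization, Finsupp.mem_support_iff] at hq'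
  rw [Nat.factorization_div hDr] at hq'
  simp only [Finsupp.coe_tsub, Pi.sub_apply] at hq'
  rw [D_fac hr hS q, if_pos hq] at hq'
  omega

private lemma unitary_key {r d : ℕ} (hr : r ≠ 0) (hd : d ∣ r) (hcop : Nat.Coprime d (r / d)) :
    ∀ p ∈ d.primeFactors, d.factorization p = r.factorization p := by
  intro p hp
  have hd0 : d ≠ 0 := fun h => hr (by simpa [h] using hd)
  have hple : d.factorization ≤ r.factorization :=
    (Nat.factorization_le_iff_dvd hd0 hr).mpr hd
  have h1 : d.factorization p ≤ r.factorization p := hple p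
  have hpd : p ∣ d := Nat.dvd_of_mem_primeFactors hp
  have hpp : p.Prime := Nat.prime_of_mem_primeFactors hp
  have hndvd : ¬ p ∣ (r / d) := fun h =>
    hpp.one_lt.ne' (Nat.eq_one_of_dvd_coprimes hcop hpd h)
  have h2 : (r / d).factorization p = 0 := by
    rw [← Finsupp.notMem_support_iff, Nat.support_factorization]
    intro h
    exact hndvd (Nat.dvd_of_mem_primeFactors h)
  rw [Nat.factorization_div hd] at h2
  simp only [Finsupp.coe_tsub, Pi.sub_apply] at h2
  omega

private lemma unitary_eq_D {r d : ℕ} (hr : r ≠ 0) (hd : d ∣ r) (hcop : Nat.Coprime d (r / d)) :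
    ∏ p ∈ d.primeFactors, p ^ r.factorization p = d := by
  have hd0 : d ≠ 0 := fun h => hr (by simpa [h] using hd)
  have : ∏ p ∈ d.primeFactors, p ^ r.factorization p
      = ∏ p ∈ d.primeFactors, p ^ d.factorization p :=
    Finset.prod_congr rfl fun p hp => by rw [unitary_key hr hd hcop p hp]
  rw [this]
  conv_rhs => rw [← Nat.factorization_prod_pow_eq_self hd0]
  rw [Finsupp.prod, Nat.support_factorization]

private lemma mem_T_of {r k : ℕ} (hr : r ≠ 0) {d : ℕ}
    (hd : d ∈ r.divisors.filter (fun d => d ∣ k ∧ Nat.Coprime d (r / d))) :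
    d.primeFactors ⊆ r.primeFactors.filter (fun p => p ^ r.factorization p ∣ k) := by
  rw [Finset.mem_filter, Nat.mem_divisors] at hd
  obtain ⟨⟨hdr, -⟩, hdk, hcop⟩ := hd
  intro p hp
  rw [Finset.mem_filter]
  refine ⟨Nat.primeFactors_mono hdr hr hp, ?_⟩
  rw [← unitary_key hr hdr hcop p hp]
  exact (Nat.ordProj_dvd d p).trans hdk

private lemma D_mem_of {r k : ℕ} (hr : r ≠ 0) (hk : k ≠ 0) {S : Finset ℕ}
    (hS : S ∈ (r.primeFactors.filter (fun p => p ^ r.factorization p ∣ k)).powerset) :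
    (∏ p ∈ S, p ^ r.factorization p)
      ∈ r.divisors.filter (fun d => d ∣ k ∧ Nat.Coprime d (r / d)) := by
  rw [Finset.mem_powerset] at hS
  have hS' : S ⊆ r.primeFactors := hS.trans (Finset.filter_subset _ _)
  rw [Finset.mem_filter, Nat.mem_divisors]
  refine ⟨⟨D_dvd hr hS', hr⟩, ?_, D_coprime hr hS'⟩
  rw [← Nat.factorization_le_iff_dvd (D_ne_zero hr hS') hk]
  intro q
  rw [D_fac hr hS' q]
  split_ifs with hq
  · have := hS hq
    rw [Finset.mem_filter] at this
    exact ((Nat.prime_of_mem_primeFactors (hS' hq)).pow_dvd_iff_le_factorization hk).mp this.2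
  · simp

private lemma unitaryGcd_eq_one_iff {r k : ℕ} (hr : r ≠ 0) (hk : k ≠ 0) :
    unitaryGcd k r = 1 ↔
      r.primeFactors.filter (fun p => p ^ r.factorization p ∣ k) = ∅ := by
  constructor
  · intro h
    by_contra hne
    obtain ⟨p, hp⟩ := Finset.nonempty_of_ne_empty hne
    have hmem := D_mem_of hr hk (S := {p}) (by simpa using hp)
    have hle : ({p} : Finset ℕ).prod (fun p => p ^ r.factorization p) ≤ unitaryGcd k r :=
      Finset.le_sup (f := id) hmem
    rw [Finset.prod_singleton] at hle
    rw [h] at hle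
    rw [Finset.mem_filter] at hp
    have hp2 : 2 ≤ p := (Nat.prime_of_mem_primeFactors hp.1).two_le
    have hv : r.factorization p ≠ 0 := by
      rw [← Finsupp.mem_support_iff, Nat.support_factorization]; exact hp.1
    have : 2 ≤ p ^ r.factorization p :=
      le_trans hp2 (Nat.le_self_pow hv p)
    omega
  · intro h
    have hset : r.divisors.filter (fun d => d ∣ k ∧ Nat.Coprime d (r / d)) = {1} := by
      apply Finset.Subset.antisymm
      · intro d hd
        have hsub := mem_T_of hr hd
        rw [h, Finset.subset_empty] at hsub
        rw [Finset.mem_filter, Nat.mem_divisors] at hd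
        have := unitary_eq_D hr hd.1.1 hd.2.2
        rw [hsub, Finset.prod_empty] at this
        simp [← this]
      · intro d hd
        rw [Finset.mem_singleton] at hd
        subst hd
        simp [Nat.mem_divisors, hr, Nat.coprime_one_left]
    rw [unitaryGcd, hset]
    simp

private lemma indicator_lemma {r k : ℕ} (hr : r ≠ 0) (hk : k ≠ 0) :
    ∑ d ∈ r.divisors.filter (fun d => d ∣ k ∧ Nat.Coprime d (r / d)),
        ((-1 : ℂ)) ^ d.primeFactors.card
      = if unitaryGcd k r = 1 then 1 else 0 := by
  set T := r.primeFactors.filter (fun p => p ^ r.factorization p ∣ k) with hT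
  have hbij : ∑ d ∈ r.divisors.filter (fun d => d ∣ k ∧ Nat.Coprime d (r / d)),
      ((-1 : ℂ)) ^ d.primeFactors.card = ∑ S ∈ T.powerset, ((-1 : ℂ)) ^ S.card := by
    apply Finset.sum_nbij' (i := fun d => d.primeFactors)
      (j := fun S => ∏ p ∈ S, p ^ r.factorization p)
    · intro d hd
      rw [Finset.mem_powerset]
      exact mem_T_of hr hd
    · intro S hS
      exact D_mem_of hr hk hS
    · intro d hd
      rw [Finset.mem_filter, Nat.mem_divisors] at hd
      exact unitary_eq_D hr hd.1.1 hd.2.2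
    · intro S hS
      rw [Finset.mem_powerset] at hS
      exact D_primeFactors hr (hS.trans (Finset.filter_subset _ _))
    · intro d hd
      rfl
  rw [hbij]
  have : ∑ S ∈ T.powerset, ((-1 : ℂ)) ^ S.card
      = ((∑ S ∈ T.powerset, ((-1 : ℤ)) ^ S.card : ℤ) : ℂ) := by push_cast; rfl
  rw [this, Finset.sum_powerset_neg_one_pow_card]
  by_cases h : T = ∅
  · rw [if_pos h, if_pos ((unitaryGcd_eq_one_iff hr hk).mpr h)]; norm_num
  · rw [if_neg h, if_neg (fun hh => h ((unitaryGcd_eq_one_iff hr hk).mp hh))]; norm_num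

private lemma urs_inner_sum (n r d : ℕ) (hr : r ≠ 0) (hd : d ∣ r) (hd0 : d ≠ 0) :
    ∑ k ∈ (Icc 1 r).filter (fun k => d ∣ k),
        Complex.exp (2 * Real.pi * Complex.I * k * n / r)
      = if (r / d) ∣ n then ((r / d : ℕ) : ℂ) else 0 := by
  have hm : r / d ≠ 0 :=
    Nat.div_ne_zero_iff.mpr ⟨hd0, Nat.le_of_dvd (Nat.pos_of_ne_zero hr) hd⟩
  rw [← geom_aux (r / d) n hm]
  apply Finset.sum_nbij' (i := fun k => k / d) (j := fun j => d * j)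
  · intro k hk
    rw [Finset.mem_filter, Finset.mem_Icc] at hk
    obtain ⟨⟨h1, h2⟩, hdk⟩ := hk
    rw [Finset.mem_Icc]
    constructor
    · exact Nat.one_le_div_iff (Nat.pos_of_ne_zero hd0) |>.mpr (Nat.le_of_dvd (by omega) hdk)
    · exact Nat.div_le_div_right h2
  · intro j hj
    rw [Finset.mem_Icc] at hj
    rw [Finset.mem_filter, Finset.mem_Icc]
    refine ⟨⟨?_, ?_⟩, Dvd.intro j rfl⟩
    · exact Nat.one_le_iff_ne_zero.mpr (Nat.mul_ne_zero hd0 (by omega))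
    · calc d * j ≤ d * (r / d) := Nat.mul_le_mul_left d hj.2
        _ = r := Nat.mul_div_cancel' hd
  · intro k hk
    rw [Finset.mem_filter] at hk
    exact Nat.mul_div_cancel' hk.2
  · intro j hj
    exact Nat.mul_div_cancel_left j (Nat.pos_of_ne_zero hd0)
  · intro k hk
    rw [Finset.mem_filter] at hk
    obtain ⟨c, rfl⟩ := hk.2
    have hdc : (d : ℂ) ≠ 0 := Nat.cast_ne_zero.mpr hd0
    obtain ⟨m, hm'⟩ := hd
    have hrm : r / d = m := by rw [hm', Nat.mul_div_cancel_left m (Nat.pos_of_ne_zero hd0)]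
    rw [Nat.mul_div_cancel_left c (Nat.pos_of_ne_zero hd0), hrm, hm']
    push_cast
    have hmc : (m : ℂ) ≠ 0 := by
      intro h
      rw [Nat.cast_eq_zero] at h
      exact hr (by rw [hm', h, mul_zero])
    congr 1
    rw [div_eq_div_iff (mul_ne_zero hdc hmc) hmc]
    ring

/-- `c*(n,r) = ∑_{d ∣ n, d ∣ r, gcd(d, r/d) = 1} d·(−1)^{ω(r/d)}`; in particular
`c*(n,r)` is an integer. -/
theorem unitaryRamanujanSum_eq_sum (n r : ℕ) (hn : 0 < n) (hr : 0 < r) :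
    unitaryRamanujanSum n r =
      ∑ d ∈ r.divisors.filter (fun d => d ∣ n ∧ Nat.Coprime d (r / d)),
        (d : ℂ) * (-1) ^ (r / d).primeFactors.card ∧
    ∃ m : ℤ, unitaryRamanujanSum n r = (m : ℂ) := by
  have hr0 : r ≠ 0 := hr.ne'
  have main : unitaryRamanujanSum n r =
      ∑ d ∈ r.divisors.filter (fun d => d ∣ n ∧ Nat.Coprime d (r / d)),
        (d : ℂ) * (-1) ^ (r / d).primeFactors.card := by
    rw [unitaryRamanujanSum, Finset.sum_filter]
    have step1 : ∀ k ∈ Icc 1 r,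
        (if unitaryGcd k r = 1 then Complex.exp (2 * Real.pi * Complex.I * k * n / r) else 0)
        = ∑ d ∈ r.divisors.filter (fun d => Nat.Coprime d (r / d)),
            (if d ∣ k then ((-1 : ℂ)) ^ d.primeFactors.card
              * Complex.exp (2 * Real.pi * Complex.I * k * n / r) else 0) := by
      intro k hk
      rw [Finset.mem_Icc] at hk
      have hk0 : k ≠ 0 := by omega
      have : ∑ d ∈ r.divisors.filter (fun d => Nat.Coprime d (r / d)),
            (if d ∣ k then ((-1 : ℂ)) ^ d.primeFactors.card
              * Complex.exp (2 * Real.pi * Complex.I * k * n / r) else 0)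
          = (∑ d ∈ r.divisors.filter (fun d => d ∣ k ∧ Nat.Coprime d (r / d)),
              ((-1 : ℂ)) ^ d.primeFactors.card)
            * Complex.exp (2 * Real.pi * Complex.I * k * n / r) := by
        rw [Finset.sum_mul, ← Finset.sum_filter, Finset.filter_filter]
        apply Finset.sum_congr
        · apply Finset.filter_congr
          intro d _
          tauto
        · intros; rfl
      rw [this, indicator_lemma hr0 hk0]
      split_ifs <;> simp
    rw [Finset.sum_congr rfl step1, Finset.sum_comm]
    have step2 : ∀ d ∈ r.divisors.filter (fun d => Nat.Coprime d (r / d)),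
        (∑ k ∈ Icc 1 r, if d ∣ k then ((-1 : ℂ)) ^ d.primeFactors.card
            * Complex.exp (2 * Real.pi * Complex.I * k * n / r) else 0)
        = ((-1 : ℂ)) ^ d.primeFactors.card * (if (r / d) ∣ n then ((r / d : ℕ) : ℂ) else 0) := by
      intro d hd
      rw [Finset.mem_filter, Nat.mem_divisors] at hd
      have hd0 : d ≠ 0 := by
        rintro rfl
        exact hr0 (Nat.eq_zero_of_zero_dvd hd.1.1)
      rw [← Finset.sum_filter, ← Finset.mul_sum, urs_inner_sum n r d hr0 hd.1.1 hd0]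
    rw [Finset.sum_congr rfl step2]
    -- now reindex d ↦ r / d
    have step3 : ∑ d ∈ r.divisors.filter (fun d => Nat.Coprime d (r / d)),
        ((-1 : ℂ)) ^ d.primeFactors.card * (if (r / d) ∣ n then ((r / d : ℕ) : ℂ) else 0)
      = ∑ d ∈ (r.divisors.filter (fun d => Nat.Coprime d (r / d))).filter
            (fun d => (r / d) ∣ n),
          ((-1 : ℂ)) ^ d.primeFactors.card * ((r / d : ℕ) : ℂ) := by
      conv_rhs => rw [Finset.sum_filter]
      apply Finset.sum_congr rfl
      intros; rw [mul_ite, mul_zero]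
    rw [step3]
    apply Finset.sum_nbij' (i := fun d => r / d) (j := fun d => r / d)
    · intro d hd
      simp only [Finset.mem_filter, Nat.mem_divisors] at hd ⊢
      obtain ⟨⟨⟨hdr, -⟩, hcop⟩, hdn⟩ := hd
      have hself : r / (r / d) = d := Nat.div_div_self hdr hr0
      exact ⟨⟨Nat.div_dvd_of_dvd hdr, hr0⟩, hdn, by rw [hself]; exact hcop.symm⟩
    · intro d hd
      simp only [Finset.mem_filter, Nat.mem_divisors] at hd ⊢
      obtain ⟨⟨hdr, -⟩, hdn, hcop⟩ := hd
      have hself : r / (r / d) = d := Nat.div_div_self hdr hr0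
      exact ⟨⟨⟨Nat.div_dvd_of_dvd hdr, hr0⟩, by rw [hself]; exact hcop.symm⟩, by rw [hself]; exact hdn⟩
    · intro d hd
      simp only [Finset.mem_filter, Nat.mem_divisors] at hd
      exact Nat.div_div_self hd.1.1.1 hr0
    · intro d hd
      simp only [Finset.mem_filter, Nat.mem_divisors] at hd
      exact Nat.div_div_self hd.1.1 hr0
    · intro d hd
      simp only [Finset.mem_filter, Nat.mem_divisors] at hd
      have hself : r / (r / d) = d := Nat.div_div_self hd.1.1.1 hr0
      rw [hself, mul_comm]
  refine ⟨main, ?_⟩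
  refine ⟨∑ d ∈ r.divisors.filter (fun d => d ∣ n ∧ Nat.Coprime d (r / d)),
      (d : ℤ) * (-1) ^ (r / d).primeFactors.card, ?_⟩
  rw [main]
  push_cast
  rfl
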